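/- arXiv:math/0609530 — 2 statements merged into one kernel-verified Lean document; each statement's English description precedes it below -/
import Mathlib

section
/- Let V be a finite-dimensional real vector space, let T_1, …, T_n be linearly independent elements of the dual space V*, and let Q be a quadratic form on V whose restriction to the subspace ⋂_{i=1}^n Ker(T_i) is not identically zero. Then Q, T_1, …, T_n are algebraically independent as functions on V: if F ∈ ℝ[z_0, z_1, …, z_n] is a polynomial such that the function V → ℝ given by v ↦ F(Q(v), T_1(v), …, T_n(v)) is identically zero, then F is the zero polynomial. -/
/-- **Lemma (Algebraic independence of linearly independent functionals and a quadratic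
form).** Let `V` be a finite-dimensional real vector space, `T 0, …, T (n-1)` linearly
independent elements of the dual space, and `Q` a quadratic form on `V` which is not
identically zero on `⋂ i, ker (T i)`.  If `F ∈ ℝ[z_0, …, z_n]` satisfies
`F (Q v, T 0 v, …, T (n-1) v) = 0` for all `v ∈ V`, then `F = 0`. -/
theorem witten_stmt0 (V : Type*) [AddCommGroup V] [Module ℝ V] [FiniteDimensional ℝ V]
    (n : ℕ) (T : Fin n → (V →ₗ[ℝ] ℝ)) (hT : LinearIndependent ℝ T)
    (Q : QuadraticForm ℝ V)
    (hQ : ∃ v ∈ ⨅ i, LinearMap.ker (T i), Q v ≠ 0)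
    (F : MvPolynomial (Fin (n + 1)) ℝ)
    (hF : ∀ v : V, MvPolynomial.eval (Fin.cons (Q v) fun i => T i v) F = 0) :
    F = 0 := by
  obtain ⟨v₀, hv₀, ha⟩ := hQ
  have hT0 : ∀ i, T i v₀ = 0 := fun i => (Submodule.mem_iInf _).1 hv₀ i
  -- dual family
  have hdual : ∀ j : Fin n, ∃ e : V, T j e = 1 ∧ ∀ i, i ≠ j → T i e = 0 := by
    intro j
    by_contra h
    push_neg at h
    have hker : (⨅ i : {i : Fin n // i ≠ j}, LinearMap.ker (T i)) ≤ LinearMap.ker (T j) := by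
      intro v hv
      simp only [Submodule.mem_iInf, LinearMap.mem_ker] at hv ⊢
      by_contra hvj
      obtain ⟨i, hij, hi⟩ := h ((T j v)⁻¹ • v) (by simp [inv_mul_cancel₀ hvj])
      exact hi (by simp [hv ⟨i, hij⟩])
    have hmem := mem_span_of_iInf_ker_le_ker hker
    have hrange : Set.range (fun i : {i : Fin n // i ≠ j} => T i)
        = T '' {i | i ≠ j} := by
      rw [show (fun i : {i : Fin n // i ≠ j} => T i) = T ∘ (↑) from rfl,
        Set.range_comp, Subtype.range_coe_subtype]
    rw [hrange] at hmem
    exact hT.notMem_span_image (by simp) hmem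
  choose e he1 he0 using hdual
  set w : (Fin n → ℝ) → V := fun x => ∑ j, x j • e j with hw
  have hTw : ∀ x i, T i (w x) = x i := by
    intro x i
    simp only [hw, map_sum, map_smul, smul_eq_mul]
    rw [Finset.sum_eq_single i]
    · simp [he1]
    · intro j _ hj; simp [he0 j i (Ne.symm hj)]
    · simp
  -- key: F vanishes at every point
  have key : ∀ y : Fin (n + 1) → ℝ, MvPolynomial.eval y F = 0 := by
    intro y
    set x := Fin.tail y with hx
    set P : Polynomial ℝ :=
      MvPolynomial.aeval (Fin.cons Polynomial.X fun i => Polynomial.C (x i)) F with hPdef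
    have hP : ∀ t : ℝ, P.eval t = MvPolynomial.eval (Fin.cons t x) F := by
      intro t
      have := congrArg (fun φ => φ F)
        (MvPolynomial.comp_aeval (f := Fin.cons Polynomial.X fun i => Polynomial.C (x i))
          (Polynomial.aeval t : Polynomial ℝ →ₐ[ℝ] ℝ))
      simp only [AlgHom.comp_apply] at this
      have h2 : (fun i => (Polynomial.aeval t) ((Fin.cons Polynomial.X
          (fun i => Polynomial.C (x i)) : Fin (n+1) → Polynomial ℝ) i))
          = Fin.cons t x := by
        funext i
        refine Fin.cases ?_ ?_ i <;> simp
      rw [h2] at this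
      rw [← Polynomial.coe_aeval_eq_eval, hPdef]
      calc (Polynomial.aeval t) ((MvPolynomial.aeval
          (Fin.cons Polynomial.X fun i => Polynomial.C (x i))) F)
          = (MvPolynomial.aeval (Fin.cons t x) : MvPolynomial (Fin (n+1)) ℝ →ₐ[ℝ] ℝ) F := this
        _ = MvPolynomial.eval (Fin.cons t x) F := by
            rw [← MvPolynomial.coe_aeval_eq_eval]; rfl
    -- roots
    set a := Q v₀ with haa
    have hroot : ∀ s : ℝ, P.IsRoot (Q (s • v₀ + w x)) := by
      intro s
      have h1 : (fun i => T i (s • v₀ + w x)) = x := by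
        funext i; simp [hT0, hTw]
      have := hF (s • v₀ + w x)
      rw [h1] at this
      simpa [Polynomial.IsRoot, hP] using this
    have hg : ∀ s : ℝ, Q (s • v₀ + w x)
        = s * s * a + s * QuadraticMap.polar Q v₀ (w x) + Q (w x) := by
      intro s
      rw [show Q (s • v₀ + w x) = QuadraticMap.polar Q (s • v₀) (w x) + Q (s • v₀) + Q (w x) by
        simp [QuadraticMap.polar]; ring]
      rw [QuadraticMap.polar_smul_left, QuadraticMap.map_smul]
      simp [smul_eq_mul]; ring
    set p := QuadraticMap.polar Q v₀ (w x)
    set q := Q (w x)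
    have hPz : P = 0 := by
      apply Polynomial.eq_zero_of_infinite_isRoot
      have hsub : (fun s : ℝ => s * s * a + s * p + q) '' Set.Ioi (-p / (2 * a))
          ⊆ {t | P.IsRoot t} := by
        rintro t ⟨s, _, rfl⟩
        have := hroot s
        rwa [hg s] at this
      refine Set.Infinite.mono hsub ?_
      apply Set.Infinite.image ?_ (Set.Ioi_infinite _)
      intro s1 h1 s2 h2 heq
      by_contra hne
      simp only at heq
      have hsum : a * (s1 + s2) + p = 0 := by
        have hz : (s1 - s2) * (a * (s1 + s2) + p) = 0 := by linear_combination heq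
        rcases mul_eq_zero.1 hz with h | h
        · exact absurd (by linarith) hne
        · exact h
      have hs : s1 + s2 = -p / a := by
        field_simp at hsum ⊢
        linarith
      have h1' : s1 > -p / (2 * a) := h1
      have h2' : s2 > -p / (2 * a) := h2
      have : -p / a = -p / (2 * a) + -p / (2 * a) := by
        field_simp; ring
      linarith [hs, this]
    have := hP (y 0)
    rw [hPz] at this
    simp only [Polynomial.eval_zero] at this
    rw [hx, Fin.cons_self_tail] at this
    exact this.symm
  exact MvPolynomial.funext (fun y => by simp [key y])
end

section
/- Let V be a finite-dimensional real vector space with dim V ≥ 3, and let Q be a nondegenerate quadratic form on V that is indefinite, i.e. there exist vectors u, v ∈ V with Q(u) > 0 and Q(v) < 0. Let φ_1, …, φ_m be finitely many nonzero linear functionals on V. Then there exists h ∈ V with Q(h) = 0 and φ_j(h) ≠ 0 for every j = 1, …, m. In particular, the set Q^{-1}(0) \ ⋃_{j=1}^m Ker(φ_j) is non-empty. -/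
/-- Let `V` be a finite-dimensional real vector space with `dim V ≥ 3`, and let `Q` be the
quadratic form `Q v = B v v` of a nondegenerate symmetric bilinear form `B` on `V` which is
indefinite (takes both positive and negative values).  Then for any finitely many nonzero
linear functionals `φ 0, …, φ (m-1)` on `V` there exists `h ∈ V` with `Q h = 0` and
`φ j h ≠ 0` for every `j`; that is, `Q⁻¹(0) \ ⋃ j, ker (φ j)` is non-empty. -/
theorem witten_stmt7 (V : Type*) [AddCommGroup V] [Module ℝ V] [FiniteDimensional ℝ V]
    (hdim : 3 ≤ Module.finrank ℝ V)
    (B : V →ₗ[ℝ] V →ₗ[ℝ] ℝ) (hsymm : ∀ v w : V, B v w = B w v)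
    (hnd : ∀ v : V, (∀ w : V, B v w = 0) → v = 0)
    (hpos : ∃ u : V, 0 < B u u) (hneg : ∃ v : V, B v v < 0)
    (m : ℕ) (φ : Fin m → (V →ₗ[ℝ] ℝ)) (hφ : ∀ j, φ j ≠ 0) :
    ∃ h : V, B h h = 0 ∧ ∀ j, φ j h ≠ 0 := by
  classical
  obtain ⟨u, hu⟩ := hpos
  obtain ⟨v, hv⟩ := hneg
  have huu : B u u ≠ 0 := ne_of_gt hu
  -- orthogonalize v against u
  set v' : V := v - (B u v / B u u) • u with hv'def
  have hBuv' : B u v' = 0 := by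
    simp only [hv'def, map_sub, map_smul, smul_eq_mul, LinearMap.sub_apply,
      LinearMap.smul_apply]
    field_simp
    ring
  have hQv' : B v' v' < 0 := by
    have expand : B v' v' = B v v - (B u v)^2 / B u u := by
      simp only [hv'def, map_sub, map_smul, LinearMap.sub_apply, LinearMap.smul_apply,
        smul_eq_mul, hsymm v u]
      field_simp
      ring
    have h2 : 0 ≤ (B u v)^2 / B u u := div_nonneg (sq_nonneg _) hu.le
    rw [expand]; linarith
  set r : ℝ := Real.sqrt (-(B v' v')) with hrdef
  set s : ℝ := Real.sqrt (B u u) with hsdef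
  have hr : 0 < r := Real.sqrt_pos.2 (by linarith)
  have hs : 0 < s := Real.sqrt_pos.2 hu
  have hr2 : r^2 = -(B v' v') := Real.sq_sqrt (by linarith)
  have hs2 : s^2 = B u u := Real.sq_sqrt hu.le
  set n : V := r • u + s • v' with hndef
  have hQn : B n n = 0 := by
    simp only [hndef, map_add, map_smul, LinearMap.add_apply, LinearMap.smul_apply,
      smul_eq_mul, hBuv', hsymm v' u]
    nlinarith [hr2, hs2]
  have hBnu : B n u = r * B u u := by
    simp only [hndef, map_add, map_smul, LinearMap.add_apply, LinearMap.smul_apply,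
      smul_eq_mul, hsymm v' u, hBuv']
    ring
  have hBnu0 : B n u ≠ 0 := by
    rw [hBnu]; exact mul_ne_zero (ne_of_gt hr) huu
  -- the key quadratic functions
  set f : Fin m → V → ℝ := fun j d => B d d * φ j n - 2 * B n d * φ j d with hfdef
  -- the null family
  have hnull : ∀ d : V, B ((B d d) • n - (2 * B n d) • d) ((B d d) • n - (2 * B n d) • d) = 0 := by
    intro d
    simp only [map_sub, map_smul, LinearMap.sub_apply, LinearMap.smul_apply, smul_eq_mul,
      hQn, hsymm d n]
    ring
  have hval : ∀ j (d : V), φ j ((B d d) • n - (2 * B n d) • d) = f j d := by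
    intro j d
    simp only [map_sub, map_smul, smul_eq_mul, hfdef]
  -- each f j is somewhere nonzero
  have hstep : ∀ j, ∃ d : V, f j d ≠ 0 := by
    intro j
    by_cases hφn : φ j n = 0
    · -- need d with B n d ≠ 0 and φ j d ≠ 0
      obtain ⟨a, ha⟩ : ∃ a, φ j a ≠ 0 := by
        by_contra h; push_neg at h; exact hφ j (LinearMap.ext h)
      have key : ∀ d : V, B n d ≠ 0 → φ j d ≠ 0 → f j d ≠ 0 := by
        intro d h1 h2
        simp only [hfdef, hφn, mul_zero, zero_sub, neg_ne_zero]
        exact mul_ne_zero (mul_ne_zero two_ne_zero h1) h2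
      by_cases hφu : φ j u = 0
      · by_cases hna : B n a = 0
        · refine ⟨a + u, key _ ?_ ?_⟩
          · simp only [map_add, hna, zero_add]; exact hBnu0
          · simp only [map_add, hφu, add_zero]; exact ha
        · exact ⟨a, key a hna ha⟩
      · exact ⟨u, key u hBnu0 hφu⟩
    · -- φ j n ≠ 0 : contradiction argument using dim ≥ 3
      by_contra hcon
      push_neg at hcon
      have hW : ∀ d : V, B n d = 0 → B d d = 0 := by
        intro d hd
        have := hcon d
        simp only [hfdef, hd, mul_zero, zero_mul, sub_zero] at this
        rcases mul_eq_zero.mp this with h | h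
        · exact h
        · exact absurd h hφn
      have hWB : ∀ d e : V, B n d = 0 → B n e = 0 → B d e = 0 := by
        intro d e hd he
        have h1 := hW d hd
        have h2 := hW e he
        have h3 := hW (d + e) (by simp [map_add, hd, he])
        have h4 : B (d + e) (d + e) = B d d + 2 * B d e + B e e := by
          simp only [map_add, LinearMap.add_apply, hsymm e d]; ring
        rw [h4, h1, h2] at h3; linarith
      have hn0 : n ≠ 0 := by
        intro h; apply hBnu0; rw [h]; simp
      -- finrank of ker (B n) is finrank V - 1 ≥ 2
      have hrange : Module.finrank ℝ (LinearMap.range (B n)) = 1 := by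
        have hle : Module.finrank ℝ (LinearMap.range (B n)) ≤ 1 := by
          simpa using Submodule.finrank_le (LinearMap.range (B n))
        have hne : LinearMap.range (B n) ≠ ⊥ := by
          intro h
          apply hBnu0
          have : B n u ∈ LinearMap.range (B n) := LinearMap.mem_range_self _ u
          rw [h] at this; simpa using this
        have hpos' : 0 < Module.finrank ℝ (LinearMap.range (B n)) := by
          have hnt : Nontrivial (LinearMap.range (B n)) :=
            Submodule.nontrivial_iff_ne_bot.mpr hne
          exact Module.finrank_pos
        omega
      have hker : 2 ≤ Module.finrank ℝ (LinearMap.ker (B n)) := by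
        have := LinearMap.finrank_range_add_finrank_ker (B n)
        omega
      have hspan_lt : Submodule.span ℝ {n} < LinearMap.ker (B n) := by
        apply Submodule.lt_of_le_of_finrank_lt_finrank
        · rw [Submodule.span_le, Set.singleton_subset_iff]
          exact LinearMap.mem_ker.mpr hQn
        · rw [finrank_span_singleton hn0]; omega
      obtain ⟨d, hdW, hdn⟩ := SetLike.exists_of_lt hspan_lt
      have hdW' : B n d = 0 := hdW
      set c : ℝ := B d u / B n u with hcdef
      have hall : ∀ w : V, B (d - c • n) w = 0 := by
        intro w
        set t : ℝ := B n w / B n u with htdef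
        have he : B n (w - t • u) = 0 := by
          simp only [map_sub, map_smul, smul_eq_mul, htdef]
          field_simp
          ring
        have hde : B d (w - t • u) = 0 := hWB d (w - t • u) hdW' he
        have hdw : B d w = t * B d u := by
          simp only [map_sub, map_smul, smul_eq_mul] at hde
          linarith
        simp only [map_sub, map_smul, LinearMap.sub_apply, LinearMap.smul_apply,
          smul_eq_mul, hdw, hcdef, htdef]
        field_simp
        ring
      have hd0 : d - c • n = 0 := hnd _ hall
      apply hdn
      have : d = c • n := by rwa [sub_eq_zero] at hd0
      exact Submodule.mem_span_singleton.mpr ⟨c, this.symm⟩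
  -- combine: finitely many quadratics, simultaneously nonzero somewhere
  have hmain : ∀ S : Finset (Fin m), ∃ d : V, ∀ j ∈ S, f j d ≠ 0 := by
    intro S
    induction S using Finset.induction with
    | empty => exact ⟨0, fun j hj => absurd hj (by simp)⟩
    | @insert j S hjS ih =>
      obtain ⟨d, hd⟩ := ih
      obtain ⟨e, he⟩ := hstep j
      set w : V := e - d with hwdef
      set p : Fin m → Polynomial ℝ := fun k =>
        Polynomial.C (f k w) * Polynomial.X ^ 2 +
        Polynomial.C (2 * B d w * φ k n - 2 * (B n d * φ k w + B n w * φ k d)) * Polynomial.X +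
        Polynomial.C (f k d) with hpdef
      have heval : ∀ k (t : ℝ), (p k).eval t = f k (d + t • w) := by
        intro k t
        simp only [hpdef, hfdef, Polynomial.eval_add, Polynomial.eval_mul, Polynomial.eval_pow,
          Polynomial.eval_C, Polynomial.eval_X, map_add, map_smul, LinearMap.add_apply,
          LinearMap.smul_apply, smul_eq_mul, hsymm w d]
        ring
      have hp0 : ∀ k ∈ insert j S, p k ≠ 0 := by
        intro k hk hzero
        rcases Finset.mem_insert.mp hk with rfl | hkS
        · have h1 : d + (1:ℝ) • w = e := by rw [one_smul, hwdef]; abel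
          have := heval k 1
          rw [hzero, h1] at this
          simp only [Polynomial.eval_zero] at this
          exact he this.symm
        · have := heval k 0
          rw [hzero] at this
          simp only [Polynomial.eval_zero, zero_smul, add_zero] at this
          exact hd k hkS this.symm
      have hP : (∏ k ∈ insert j S, p k) ≠ 0 :=
        Finset.prod_ne_zero_iff.mpr hp0
      obtain ⟨t, ht⟩ : ∃ t : ℝ, (∏ k ∈ insert j S, p k).eval t ≠ 0 := by
        by_contra h
        push_neg at h
        exact hP (Polynomial.zero_of_eval_zero _ h)
      refine ⟨d + t • w, fun k hk => ?_⟩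
      rw [← heval k t]
      intro hzero
      apply ht
      rw [Polynomial.eval_prod]
      exact Finset.prod_eq_zero hk hzero
  obtain ⟨d, hd⟩ := hmain Finset.univ
  refine ⟨(B d d) • n - (2 * B n d) • d, hnull d, fun j => ?_⟩
  rw [hval j d]
  exact hd j (Finset.mem_univ j)
end
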